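/- Fix ξ = (ξ₁,ξ₂) ∈ 𝔻 and write |ξ|² = ξ₁²+ξ₂². (i) Suppose h₁, h₂ : closure(𝔻) → ℝ are continuous on the closed unit disk, harmonic in 𝔻, and satisfy for all (x,y) ∈ ∂𝔻: h₁(x,y) = −2(x−ξ₁)/((x−ξ₁)²+(y−ξ₂)²) and h₂(x,y) = −2(y−ξ₂)/((x−ξ₁)²+(y−ξ₂)²). Then at the point ξ: h₁(ξ) = −2ξ₁/(1−|ξ|²), h₂(ξ) = −2ξ₂/(1−|ξ|²), ∂h₁/∂x(ξ) = ∂h₂/∂y(ξ) = −2/(1−|ξ|²)², ∂h₁/∂y(ξ) = ∂h₂/∂x(ξ) = 0, ∂²h₁/∂x²(ξ) = −∂²h₁/∂y²(ξ) = −4ξ₁/(1−|ξ|²)³, and ∂²h₂/∂x²(ξ) = −∂²h₂/∂y²(ξ) = 4ξ₂/(1−|ξ|²)³. (ii) If instead the boundary values are h₁(x,y) = 2(y−ξ₂)/((x−ξ₁)²+(y−ξ₂)²) and h₂(x,y) = −2(x−ξ₁)/((x−ξ₁)²+(y−ξ₂)²) on ∂𝔻, then h₁(ξ) = 2ξ₂/(1−|ξ|²),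 h₂(ξ) = −2ξ₁/(1−|ξ|²), ∂h₁/∂x(ξ) = ∂h₂/∂y(ξ) = 0, ∂h₁/∂y(ξ) = −∂h₂/∂x(ξ) = 2/(1−|ξ|²)², ∂²h₁/∂x²(ξ) = −∂²h₁/∂y²(ξ) = −4ξ₂/(1−|ξ|²)³, and ∂²h₂/∂x²(ξ) = −∂²h₂/∂y²(ξ) = −4ξ₁/(1−|ξ|²)³. -/

import Mathlib

noncomputable section

open Metric

/-- Partial derivative in the `x` direction of a scalar function, identifying `ℝ²` with `ℂ`
via `z = x + iy`. -/
def px (f : ℂ → ℝ) (z : ℂ) : ℝ := fderiv ℝ f z 1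

/-- Partial derivative in the `y` direction. -/
def py (f : ℂ → ℝ) (z : ℂ) : ℝ := fderiv ℝ f z Complex.I

/-- `f` is harmonic on `s`: it is `C²` there and its Laplacian vanishes on `s`. -/
def HarmonicOnSet (f : ℂ → ℝ) (s : Set ℂ) : Prop :=
  ContDiffOn ℝ 2 f s ∧ ∀ z ∈ s, px (px f) z + py (py f) z = 0

section AuxProofs
open Filter


lemma secondDerivTest {g : ℝ → ℝ} (hmax : IsLocalMax g 0)
    (hg : ∀ᶠ t in nhds (0:ℝ), DifferentiableAt ℝ g t)
    (hg' : DifferentiableAt ℝ (deriv g) 0) : deriv (deriv g) 0 ≤ 0 := by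
  by_contra hc
  push_neg at hc
  have h0 : deriv g 0 = 0 := hmax.deriv_eq_zero
  have hs : Tendsto (slope (deriv g) 0) (nhdsWithin 0 {(0:ℝ)}ᶜ) (nhds (deriv (deriv g) 0)) :=
    hasDerivAt_iff_tendsto_slope.1 hg'.hasDerivAt
  have hev : ∀ᶠ t in nhdsWithin 0 {(0:ℝ)}ᶜ, 0 < slope (deriv g) 0 t :=
    hs.eventually (eventually_gt_nhds hc)
  have hev2 : ∀ᶠ t in nhds (0:ℝ), (DifferentiableAt ℝ g t ∧ g t ≤ g 0) := hg.and hmax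
  rw [eventually_nhdsWithin_iff] at hev
  obtain ⟨δ, hδ, hδprop⟩ := Metric.eventually_nhds_iff.1 (hev.and hev2)
  -- on (0, δ), deriv g t > 0
  have key : ∀ t ∈ Set.Ioo (0:ℝ) δ, 0 < deriv g t := by
    intro t ht
    have h1 := (hδprop (by simp [abs_of_pos ht.1]; exact ht.2 : dist t 0 < δ)).1
      (by simpa using ne_of_gt ht.1)
    have : slope (deriv g) 0 t = deriv g t / t := by
      simp [slope, h0]; ring
    rw [this] at h1
    exact (div_pos_iff.1 h1).resolve_right (fun h => absurd ht.1 (not_lt.2 h.2.le)) |>.1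
  have hdiff : ∀ t ∈ Set.Icc (0:ℝ) (δ/2), DifferentiableAt ℝ g t := by
    intro t ht
    rcases eq_or_lt_of_le ht.1 with h | h
    · exact (hδprop (by simp [← h, hδ])).2.1
    · exact (hδprop (by rw [Real.dist_eq, sub_zero, abs_of_pos h]; linarith [ht.2] : dist t 0 < δ)).2.1
  have hmono : StrictMonoOn g (Set.Icc 0 (δ/2)) := by
    apply strictMonoOn_of_deriv_pos (convex_Icc _ _)
      (fun t ht => (hdiff t ht).continuousAt.continuousWithinAt)
    intro t ht
    rw [interior_Icc] at ht
    exact key t ⟨ht.1, by linarith [ht.2]⟩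
  have h1 : g (δ/2) > g 0 := hmono (by constructor <;> linarith) (by constructor <;> linarith)
    (by linarith)
  have h2 : g (δ/2) ≤ g 0 := (hδprop (by rw [Real.dist_eq, sub_zero, abs_of_pos (by linarith)]; linarith : dist (δ/2) 0 < δ)).2.2
  linarith

lemma fderivApply_diffOn {u : ℂ → ℝ} {s : Set ℂ} (hs : IsOpen s)
    (hu : ContDiffOn ℝ 2 u s) (w : ℂ) :
    DifferentiableOn ℝ (fun y => fderiv ℝ u y w) s := by
  have h1 : ContDiffOn ℝ 1 (fderiv ℝ u) s := hu.fderiv_of_isOpen hs (by norm_num)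
  have h2 : DifferentiableOn ℝ (fderiv ℝ u) s := h1.differentiableOn one_ne_zero
  exact fun z hz => ((ContinuousLinearMap.apply ℝ ℝ w).differentiableAt.comp_differentiableWithinAt z (h2 z hz))

lemma secondPartial_nonpos {v : ℂ → ℝ} {s : Set ℂ} (hs : IsOpen s)
    (hv : ContDiffOn ℝ 2 v s) {m : ℂ} (hm : m ∈ s) (hmax : IsLocalMax v m) (w : ℂ) :
    fderiv ℝ (fun z => fderiv ℝ v z w) m w ≤ 0 := by
  set L : ℝ → ℂ := fun t => m + t • w with hL
  have hLc : Continuous L := by continuity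
  have hL0 : L 0 = m := by simp [hL]
  have hLt : ∀ t, HasDerivAt L w t := by
    intro t
    exact (((hasDerivAt_id t).smul_const w).const_add m).congr_deriv (one_smul ℝ w)
  have hpre : IsOpen (L ⁻¹' s) := hs.preimage hLc
  have h0pre : (0:ℝ) ∈ L ⁻¹' s := by simp [hL0, hm]
  have hdiffv : DifferentiableOn ℝ v s := hv.differentiableOn (by norm_num)
  set g : ℝ → ℝ := fun t => v (L t) with hg
  have hder : ∀ t ∈ L ⁻¹' s, HasDerivAt g (fderiv ℝ v (L t) w) t := by
    intro t ht
    have hva : DifferentiableAt ℝ v (L t) := (hdiffv.differentiableAt (hs.mem_nhds ht))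
    exact hva.hasFDerivAt.comp_hasDerivAt t (hLt t)
  have hgev : ∀ᶠ t in nhds (0:ℝ), DifferentiableAt ℝ g t :=
    eventually_of_mem (hpre.mem_nhds h0pre) (fun t ht => (hder t ht).differentiableAt)
  have hderiv_eq : ∀ᶠ t in nhds (0:ℝ), deriv g t = fderiv ℝ v (L t) w :=
    eventually_of_mem (hpre.mem_nhds h0pre) (fun t ht => (hder t ht).deriv)
  -- g has local max at 0
  have hgmax : IsLocalMax g 0 := by
    have h2 := (by simpa [hL0] using (hLc.tendsto 0) : Tendsto L (nhds 0) (nhds m)).eventually hmax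
    unfold IsLocalMax IsMaxFilter
    simpa [hg, hL0] using h2
  -- Dw v := fun z => fderiv v z w, differentiable at m
  have hDw : DifferentiableAt ℝ (fun z => fderiv ℝ v z w) m :=
    (fderivApply_diffOn hs hv w).differentiableAt (hs.mem_nhds hm)
  have hcomp : HasDerivAt (fun t => fderiv ℝ v (L t) w)
      (fderiv ℝ (fun z => fderiv ℝ v z w) m w) 0 := by
    rw [← hL0] at hDw
    have h3 := hDw.hasFDerivAt.comp_hasDerivAt (x := (0:ℝ)) (hLt 0)
    rw [hL0] at h3
    exact h3
  have hdg : HasDerivAt (deriv g) (fderiv ℝ (fun z => fderiv ℝ v z w) m w) 0 := by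
    apply hcomp.congr_of_eventuallyEq
    filter_upwards [hderiv_eq] with t ht using ht
  have := secondDerivTest hgmax hgev hdg.differentiableAt
  rwa [hdg.deriv] at this


-- the auxiliary quadratic q
def qfun (z : ℂ) : ℝ := z.re ^ 2 + z.im ^ 2

lemma qfun_hasFDerivAt (z : ℂ) :
    HasFDerivAt qfun ((2 * z.re) • Complex.reCLM + (2 * z.im) • Complex.imCLM) z := by
  have h1 : HasFDerivAt (fun y : ℂ => y.re ^ 2) ((2 * z.re) • Complex.reCLM) z := by
    have h := (Complex.reCLM.hasFDerivAt (x := z)).mul (Complex.reCLM.hasFDerivAt (x := z))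
    have e : (fun y : ℂ => y.re ^ 2) = fun y : ℂ => y.re * y.re := by funext y; ring
    rw [e]
    exact h.congr_fderiv (by rw [two_mul, add_smul]; rfl)
  have h2 : HasFDerivAt (fun y : ℂ => y.im ^ 2) ((2 * z.im) • Complex.imCLM) z := by
    have h := (Complex.imCLM.hasFDerivAt (x := z)).mul (Complex.imCLM.hasFDerivAt (x := z))
    have e : (fun y : ℂ => y.im ^ 2) = fun y : ℂ => y.im * y.im := by funext y; ring
    rw [e]
    exact h.congr_fderiv (by rw [two_mul, add_smul]; rfl)
  exact h1.add h2

lemma qfun_fderiv_apply (z dir : ℂ) :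
    fderiv ℝ qfun z dir = 2 * z.re * dir.re + 2 * z.im * dir.im := by
  rw [(qfun_hasFDerivAt z).fderiv]
  simp [ContinuousLinearMap.add_apply]
  try ring

lemma qfun_contDiff : ContDiff ℝ 2 qfun := by
  have h1 : ContDiff ℝ 2 (fun y : ℂ => y.re ^ 2) := (Complex.reCLM.contDiff).pow 2
  have h2 : ContDiff ℝ 2 (fun y : ℂ => y.im ^ 2) := (Complex.imCLM.contDiff).pow 2
  exact h1.add h2

lemma qfun_pw_hasFDerivAt (dir z : ℂ) :
    HasFDerivAt (fun y => fderiv ℝ qfun y dir)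
      ((2 * dir.re) • Complex.reCLM + (2 * dir.im) • Complex.imCLM) z := by
  have h : (fun y => fderiv ℝ qfun y dir) =
      fun y : ℂ => (2 * dir.re) * y.re + (2 * dir.im) * y.im := by
    funext y; rw [qfun_fderiv_apply]; ring
  rw [h]
  exact ((Complex.reCLM.hasFDerivAt (x := z)).const_mul (2 * dir.re)).add
    ((Complex.imCLM.hasFDerivAt (x := z)).const_mul (2 * dir.im))

lemma qfun_pw_pw (dir z : ℂ) :
    fderiv ℝ (fun y => fderiv ℝ qfun y dir) z dir = 2 * dir.re ^ 2 + 2 * dir.im ^ 2 := by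
  rw [(qfun_pw_hasFDerivAt dir z).fderiv]
  simp [ContinuousLinearMap.add_apply]
  ring

lemma harmonic_le {u v : ℂ → ℝ}
    (hu_c : ContinuousOn u (closedBall 0 1)) (hv_c : ContinuousOn v (closedBall 0 1))
    (hu2 : ContDiffOn ℝ 2 u (ball 0 1)) (hv2 : ContDiffOn ℝ 2 v (ball 0 1))
    (hu_h : ∀ z ∈ ball (0:ℂ) 1, fderiv ℝ (fun y => fderiv ℝ u y 1) z 1
      + fderiv ℝ (fun y => fderiv ℝ u y Complex.I) z Complex.I = 0)
    (hv_h : ∀ z ∈ ball (0:ℂ) 1, fderiv ℝ (fun y => fderiv ℝ v y 1) z 1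
      + fderiv ℝ (fun y => fderiv ℝ v y Complex.I) z Complex.I = 0)
    (hb : ∀ z ∈ sphere (0:ℂ) 1, u z = v z) :
    ∀ z ∈ closedBall (0:ℂ) 1, u z ≤ v z := by
  intro z₀ hz₀
  have key : ∀ ε : ℝ, 0 < ε → u z₀ - v z₀ ≤ ε := by
    intro ε hε
    set w : ℂ → ℝ := fun y => u y - v y + ε * qfun y with hw
    have hw_c : ContinuousOn w (closedBall 0 1) :=
      (hu_c.sub hv_c).add ((continuous_const.mul qfun_contDiff.continuous).continuousOn)
    obtain ⟨m, hm, hmax⟩ := (isCompact_closedBall (0:ℂ) 1).exists_isMaxOn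
      ⟨0, by simp⟩ hw_c
    by_cases hmb : m ∈ ball (0:ℂ) 1
    · exfalso
      have hmax' : IsLocalMax w m := hmax.isLocalMax
        (Filter.mem_of_superset (isOpen_ball.mem_nhds hmb) ball_subset_closedBall)
      have hw2 : ContDiffOn ℝ 2 w (ball 0 1) :=
        (hu2.sub hv2).add ((contDiff_const.mul qfun_contDiff).contDiffOn)
      have hdiffu : DifferentiableOn ℝ u (ball 0 1) := hu2.differentiableOn (by norm_num)
      have hdiffv : DifferentiableOn ℝ v (ball 0 1) := hv2.differentiableOn (by norm_num)
      have hstep : ∀ dir : ℂ, ∀ y ∈ ball (0:ℂ) 1, fderiv ℝ w y dir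
          = fderiv ℝ u y dir - fderiv ℝ v y dir + ε * fderiv ℝ qfun y dir := by
        intro dir y hy
        have hud : DifferentiableAt ℝ u y := hdiffu.differentiableAt (isOpen_ball.mem_nhds hy)
        have hvd : DifferentiableAt ℝ v y := hdiffv.differentiableAt (isOpen_ball.mem_nhds hy)
        have hqd : DifferentiableAt ℝ qfun y := (qfun_hasFDerivAt y).differentiableAt
        have heq : fderiv ℝ w y = fderiv ℝ u y - fderiv ℝ v y + ε • fderiv ℝ qfun y := by
          rw [hw]
          rw [fderiv_fun_add (hud.fun_sub hvd) (hqd.const_mul ε), fderiv_fun_sub hud hvd,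
            fderiv_const_mul hqd]
        rw [heq]
        simp [ContinuousLinearMap.add_apply, ContinuousLinearMap.sub_apply,
          ContinuousLinearMap.smul_apply, smul_eq_mul]
      have hsecond : ∀ dir : ℂ, fderiv ℝ (fun y => fderiv ℝ w y dir) m dir
          = fderiv ℝ (fun y => fderiv ℝ u y dir) m dir
            - fderiv ℝ (fun y => fderiv ℝ v y dir) m dir
            + ε * (2 * dir.re ^ 2 + 2 * dir.im ^ 2) := by
        intro dir
        have hEq : (fun y => fderiv ℝ w y dir) =ᶠ[nhds m]
            (fun y => fderiv ℝ u y dir - fderiv ℝ v y dir + ε * fderiv ℝ qfun y dir) :=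
          Filter.eventually_of_mem (isOpen_ball.mem_nhds hmb) (hstep dir)
        rw [hEq.fderiv_eq]
        have hu' : DifferentiableAt ℝ (fun y => fderiv ℝ u y dir) m :=
          (fderivApply_diffOn isOpen_ball hu2 dir).differentiableAt (isOpen_ball.mem_nhds hmb)
        have hv' : DifferentiableAt ℝ (fun y => fderiv ℝ v y dir) m :=
          (fderivApply_diffOn isOpen_ball hv2 dir).differentiableAt (isOpen_ball.mem_nhds hmb)
        have hq' : DifferentiableAt ℝ (fun y => fderiv ℝ qfun y dir) m :=
          (qfun_pw_hasFDerivAt dir m).differentiableAt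
        rw [fderiv_fun_add (hu'.fun_sub hv') (hq'.const_mul ε), fderiv_fun_sub hu' hv',
          fderiv_const_mul hq']
        simp only [ContinuousLinearMap.add_apply, ContinuousLinearMap.sub_apply,
          ContinuousLinearMap.smul_apply, smul_eq_mul]
        rw [qfun_pw_pw]
      have h1 := secondPartial_nonpos isOpen_ball hw2 hmb hmax' (1:ℂ)
      have h2 := secondPartial_nonpos isOpen_ball hw2 hmb hmax' Complex.I
      rw [hsecond 1] at h1
      rw [hsecond Complex.I] at h2
      have hhu := hu_h m hmb
      have hhv := hv_h m hmb
      simp only [Complex.one_re, Complex.one_im, Complex.I_re, Complex.I_im] at h1 h2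
      nlinarith
    · have hms : m ∈ sphere (0:ℂ) 1 := by
        have h1 := mem_closedBall.1 hm
        have h2 := fun h => hmb (mem_ball.2 h)
        exact mem_sphere.2 (le_antisymm h1 (not_lt.1 h2))
      have hq1 : qfun m = 1 := by
        have hn : ‖m‖ = 1 := by simpa using mem_sphere_zero_iff_norm.1 hms
        have : Complex.normSq m = 1 := by
          rw [Complex.normSq_eq_norm_sq, hn]; norm_num
        simpa [qfun, Complex.normSq_apply, pow_two] using this
      have hwm : w m = ε := by
        simp [hw, hb m hms, hq1]
      have hle := hmax hz₀
      have hq0 : 0 ≤ qfun z₀ := by unfold qfun; positivity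
      simp only [Set.mem_setOf_eq, hwm] at hle
      have : u z₀ - v z₀ + ε * qfun z₀ ≤ ε := hle
      nlinarith
  by_contra hcon
  push_neg at hcon
  have := key ((u z₀ - v z₀)/2) (by linarith)
  linarith

lemma harmonic_eq {u v : ℂ → ℝ}
    (hu_c : ContinuousOn u (closedBall 0 1)) (hv_c : ContinuousOn v (closedBall 0 1))
    (hu2 : ContDiffOn ℝ 2 u (ball 0 1)) (hv2 : ContDiffOn ℝ 2 v (ball 0 1))
    (hu_h : ∀ z ∈ ball (0:ℂ) 1, fderiv ℝ (fun y => fderiv ℝ u y 1) z 1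
      + fderiv ℝ (fun y => fderiv ℝ u y Complex.I) z Complex.I = 0)
    (hv_h : ∀ z ∈ ball (0:ℂ) 1, fderiv ℝ (fun y => fderiv ℝ v y 1) z 1
      + fderiv ℝ (fun y => fderiv ℝ v y Complex.I) z Complex.I = 0)
    (hb : ∀ z ∈ sphere (0:ℂ) 1, u z = v z) :
    ∀ z ∈ ball (0:ℂ) 1, u z = v z := by
  intro z hz
  have h1 := harmonic_le hu_c hv_c hu2 hv2 hu_h hv_h hb z (ball_subset_closedBall hz)
  have h2 := harmonic_le hv_c hu_c hv2 hu2 hv_h hu_h (fun z hz => (hb z hz).symm) z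
    (ball_subset_closedBall hz)
  linarith

lemma re_partial {g : ℂ → ℂ} {a : ℂ} {z : ℂ} (h : HasDerivAt g a z) (dir : ℂ) :
    fderiv ℝ (fun y => (g y).re) z dir = (dir * a).re := by
  have h1 := (h.hasFDerivAt).restrictScalars ℝ
  have h2 := Complex.reCLM.hasFDerivAt.comp z h1
  rw [show (fun y => (g y).re) = ⇑Complex.reCLM ∘ g from rfl, h2.fderiv]
  simp [smul_eq_mul]

lemma im_partial {g : ℂ → ℂ} {a : ℂ} {z : ℂ} (h : HasDerivAt g a z) (dir : ℂ) :
    fderiv ℝ (fun y => (g y).im) z dir = (dir * a).im := by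
  have h1 := (h.hasFDerivAt).restrictScalars ℝ
  have h2 := Complex.imCLM.hasFDerivAt.comp z h1
  rw [show (fun y => (g y).im) = ⇑Complex.imCLM ∘ g from rfl, h2.fderiv]
  simp [smul_eq_mul]

lemma re_diffAt {g : ℂ → ℂ} {a : ℂ} {z : ℂ} (h : HasDerivAt g a z) :
    DifferentiableAt ℝ (fun y => (g y).re) z := by
  have h1 := (h.hasFDerivAt).restrictScalars ℝ
  exact (Complex.reCLM.hasFDerivAt.comp z h1).differentiableAt

lemma hasDerivAt_F {c z : ℂ} (h : 1 - c * z ≠ 0) :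
    HasDerivAt (fun y => -2 * y / (1 - c * y)) (-2 / (1 - c * z) ^ 2) z := by
  have h1 : HasDerivAt (fun y : ℂ => -2 * y) (-2) z := by
    simpa using (hasDerivAt_id z).const_mul (-2 : ℂ)
  have h2 : HasDerivAt (fun y : ℂ => 1 - c * y) (-c) z := by
    simpa using ((hasDerivAt_id z).const_mul c).const_sub 1
  have h3 := h1.div h2 h
  refine h3.congr_deriv ?_
  field_simp
  ring

lemma hasDerivAt_F' {c z : ℂ} (h : 1 - c * z ≠ 0) :
    HasDerivAt (fun y => -2 / (1 - c * y) ^ 2) (-(4 * c) / (1 - c * z) ^ 3) z := by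
  have h2 : HasDerivAt (fun y : ℂ => 1 - c * y) (-c) z := by
    simpa using ((hasDerivAt_id z).const_mul c).const_sub 1
  have h4 : HasDerivAt (fun y : ℂ => (1 - c * y) ^ 2) (2 * (1 - c * z) ^ 1 * -c) z := h2.pow 2
  have h5 := (hasDerivAt_const z (-2 : ℂ)).div h4 (pow_ne_zero 2 h)
  refine h5.congr_deriv ?_
  field_simp
  ring

lemma sphere_F {ξ z : ℂ} (hξ : ‖ξ‖ < 1) (hz : ‖z‖ = 1) :
    -2 * z / (1 - (starRingEnd ℂ) ξ * z) = (starRingEnd ℂ) (-2 / (z - ξ)) := by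
  have hzz : z * (starRingEnd ℂ) z = 1 := by
    rw [Complex.mul_conj, Complex.normSq_eq_norm_sq, hz]
    norm_num
  have hden : 1 - (starRingEnd ℂ) ξ * z ≠ 0 := by
    intro h
    have : ‖(starRingEnd ℂ) ξ * z‖ < 1 := by
      rw [norm_mul, RCLike.norm_conj, hz, mul_one]; exact hξ
    rw [sub_eq_zero] at h
    rw [← h] at this
    simp at this
  have hzξ : z - ξ ≠ 0 := by
    intro h
    rw [sub_eq_zero] at h
    rw [← h] at hξ
    rw [hz] at hξ
    linarith
  have hzξ' : (starRingEnd ℂ) z - (starRingEnd ℂ) ξ ≠ 0 := by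
    intro h
    apply hzξ
    have := congrArg (starRingEnd ℂ) h
    simpa [map_sub] using this
  rw [map_div₀, map_sub]
  simp only [map_neg, map_ofNat]
  rw [div_eq_div_iff hden hzξ']
  linear_combination (-2) * hzz


lemma core {ξ : ℂ} (hξ : ξ ∈ ball (0:ℂ) 1) (μ : ℂ) {w : ℂ → ℝ}
    (hc : ContinuousOn w (closedBall 0 1)) (hh : HarmonicOnSet w (ball 0 1))
    (hb : ∀ z ∈ sphere (0:ℂ) 1, w z = (μ * (-2 * z / (1 - (starRingEnd ℂ) ξ * z))).re) :
    w ξ = (μ * (-2 * ξ / (1 - (starRingEnd ℂ) ξ * ξ))).re ∧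
    px w ξ = (μ * (-2 / (1 - (starRingEnd ℂ) ξ * ξ) ^ 2)).re ∧
    py w ξ = (Complex.I * (μ * (-2 / (1 - (starRingEnd ℂ) ξ * ξ) ^ 2))).re ∧
    px (px w) ξ = (μ * (-(4 * (starRingEnd ℂ) ξ) / (1 - (starRingEnd ℂ) ξ * ξ) ^ 3)).re ∧
    py (py w) ξ = -((μ * (-(4 * (starRingEnd ℂ) ξ) / (1 - (starRingEnd ℂ) ξ * ξ) ^ 3)).re) := by
  have hξn : ‖ξ‖ < 1 := by simpa using mem_ball_zero_iff.1 hξ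
  set c := (starRingEnd ℂ) ξ with hcdef
  have hUden : ∀ z : ℂ, z ∈ closedBall (0:ℂ) 1 → 1 - c * z ≠ 0 := by
    intro z hz h
    rw [sub_eq_zero] at h
    have h1 : ‖c * z‖ < 1 := by
      calc ‖c * z‖ = ‖c‖ * ‖z‖ := norm_mul _ _
      _ ≤ ‖c‖ * 1 := by
          apply mul_le_mul_of_nonneg_left _ (norm_nonneg c)
          simpa using mem_closedBall_zero_iff.1 hz
      _ < 1 := by rw [mul_one, hcdef, RCLike.norm_conj]; exact hξn
    rw [← h] at h1
    simp at h1
  set U : Set ℂ := {z : ℂ | 1 - c * z ≠ 0} with hUdef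
  have hUopen : IsOpen U := by
    have : U = (fun z : ℂ => 1 - c * z) ⁻¹' {(0:ℂ)}ᶜ := by
      ext z; simp [hUdef]
    rw [this]
    exact (by continuity : Continuous (fun z : ℂ => 1 - c * z)).isOpen_preimage _
      isOpen_compl_singleton
  have hsubC : closedBall (0:ℂ) 1 ⊆ U := fun z hz => hUden z hz
  have hsubB : ball (0:ℂ) 1 ⊆ U := fun z hz => hUden z (ball_subset_closedBall hz)
  have hξU : ξ ∈ U := hsubB hξ
  set G : ℂ → ℂ := fun z => μ * (-2 * z / (1 - c * z)) with hGdef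
  set G' : ℂ → ℂ := fun z => μ * (-2 / (1 - c * z) ^ 2) with hG'def
  set G'' : ℂ → ℂ := fun z => μ * (-(4 * c) / (1 - c * z) ^ 3) with hG''def
  have hG : ∀ z ∈ U, HasDerivAt G (G' z) z := fun z hz => (hasDerivAt_F hz).const_mul μ
  have hG' : ∀ z ∈ U, HasDerivAt G' (G'' z) z := fun z hz => (hasDerivAt_F' hz).const_mul μ
  set u : ℂ → ℝ := fun z => (G z).re with hudef
  -- continuity of u on closed ball
  have hu_c : ContinuousOn u (closedBall 0 1) := by
    have : ContinuousOn G (closedBall 0 1) := fun z hz =>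
      ((hG z (hsubC hz)).differentiableAt.continuousAt).continuousWithinAt
    exact Complex.continuous_re.comp_continuousOn this
  -- C² of u on ball
  have hu2 : ContDiffOn ℝ 2 u (ball 0 1) := by
    have hdG : DifferentiableOn ℂ G U := fun z hz =>
      (hG z hz).differentiableAt.differentiableWithinAt
    have hcd : ContDiffOn ℂ 2 G U := hdG.contDiffOn hUopen
    have hcdR : ContDiffOn ℝ 2 G U := hcd.restrict_scalars ℝ
    exact (Complex.reCLM.contDiff.comp_contDiffOn hcdR).mono hsubB
  -- first partials of u on U
  have hfirst : ∀ dir : ℂ, ∀ z ∈ U, fderiv ℝ u z dir = (dir * G' z).re :=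
    fun dir z hz => re_partial (hG z hz) dir
  -- second partials of u on U
  have hsecond : ∀ dir : ℂ, ∀ z ∈ U,
      fderiv ℝ (fun y => fderiv ℝ u y dir) z dir = (dir * (dir * G'' z)).re := by
    intro dir z hz
    have hEq : (fun y => fderiv ℝ u y dir) =ᶠ[nhds z] (fun y => (dir * G' y).re) :=
      Filter.eventually_of_mem (hUopen.mem_nhds hz) (fun y hy => hfirst dir y hy)
    rw [hEq.fderiv_eq]
    exact re_partial ((hG' z hz).const_mul dir) dir
  -- harmonicity of u
  have hu_h : ∀ z ∈ ball (0:ℂ) 1, fderiv ℝ (fun y => fderiv ℝ u y 1) z 1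
      + fderiv ℝ (fun y => fderiv ℝ u y Complex.I) z Complex.I = 0 := by
    intro z hz
    rw [hsecond 1 z (hsubB hz), hsecond Complex.I z (hsubB hz)]
    have : Complex.I * (Complex.I * G'' z) = -(1 * (1 * G'' z)) := by
      have := Complex.I_mul_I
      ring_nf
      rw [show Complex.I ^ 2 = -1 from Complex.I_sq]
      ring
    rw [this]
    simp
  -- uniqueness: w = u on ball
  have hw2 : ContDiffOn ℝ 2 w (ball 0 1) := hh.1
  have hw_h : ∀ z ∈ ball (0:ℂ) 1, fderiv ℝ (fun y => fderiv ℝ w y 1) z 1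
      + fderiv ℝ (fun y => fderiv ℝ w y Complex.I) z Complex.I = 0 := by
    intro z hz
    have := hh.2 z hz
    exact this
  have heq : ∀ z ∈ ball (0:ℂ) 1, w z = u z :=
    harmonic_eq hc hu_c hw2 hu2 hw_h hu_h (fun z hz => by rw [hb z hz])
  -- transfer derivatives
  have hev : w =ᶠ[nhds ξ] u := Filter.eventually_of_mem (isOpen_ball.mem_nhds hξ) heq
  have hfd : fderiv ℝ w ξ = fderiv ℝ u ξ := hev.fderiv_eq
  have hpxw : ∀ y ∈ ball (0:ℂ) 1, px w y = (G' y).re := by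
    intro y hy
    have hevy : w =ᶠ[nhds y] u := Filter.eventually_of_mem (isOpen_ball.mem_nhds hy) heq
    rw [px, hevy.fderiv_eq, hfirst 1 y (hsubB hy), one_mul]
  have hpyw : ∀ y ∈ ball (0:ℂ) 1, py w y = (Complex.I * G' y).re := by
    intro y hy
    have hevy : w =ᶠ[nhds y] u := Filter.eventually_of_mem (isOpen_ball.mem_nhds hy) heq
    rw [py, hevy.fderiv_eq, hfirst Complex.I y (hsubB hy)]
  refine ⟨?_, ?_, ?_, ?_, ?_⟩
  · rw [heq ξ hξ]
  · rw [hpxw ξ hξ]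
  · rw [hpyw ξ hξ]
  · have hEq2 : (fun y => px w y) =ᶠ[nhds ξ] (fun y => (G' y).re) :=
      Filter.eventually_of_mem (isOpen_ball.mem_nhds hξ) hpxw
    rw [px, hEq2.fderiv_eq, re_partial (hG' ξ hξU) 1, one_mul]
  · have hEq2 : (fun y => py w y) =ᶠ[nhds ξ] (fun y => (Complex.I * G' y).re) :=
      Filter.eventually_of_mem (isOpen_ball.mem_nhds hξ) hpyw
    rw [py, hEq2.fderiv_eq, re_partial ((hG' ξ hξU).const_mul Complex.I) Complex.I]
    have h9 : Complex.I * (Complex.I * G'' ξ) = -(G'' ξ) := by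
      rw [← mul_assoc, Complex.I_mul_I]; ring
    rw [h9, Complex.neg_re]

lemma sub_ne_sphere {ξ z : ℂ} (hξ : ‖ξ‖ < 1) (hz : ‖z‖ = 1) :
    (z.re - ξ.re) ^ 2 + (z.im - ξ.im) ^ 2 ≠ 0 := by
  have hzξ : z - ξ ≠ 0 := by
    intro h
    rw [sub_eq_zero] at h
    rw [← h, hz] at hξ
    linarith
  have h1 : Complex.normSq (z - ξ) ≠ 0 := fun h => hzξ (Complex.normSq_eq_zero.1 h)
  rw [Complex.normSq_apply, Complex.sub_re, Complex.sub_im] at h1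
  intro h
  apply h1
  nlinarith [h]

lemma bdry1 {ξ z : ℂ} (hξ : ‖ξ‖ < 1) (hz : ‖z‖ = 1) :
    ((1:ℂ) * (-2 * z / (1 - (starRingEnd ℂ) ξ * z))).re
      = -(2 * (z.re - ξ.re)) / ((z.re - ξ.re) ^ 2 + (z.im - ξ.im) ^ 2) := by
  have hD := sub_ne_sphere hξ hz
  rw [one_mul, sphere_F hξ hz, Complex.conj_re, Complex.div_re]
  simp only [Complex.normSq_apply, Complex.sub_re, Complex.sub_im, Complex.neg_re,
    Complex.neg_im, Complex.re_ofNat, Complex.im_ofNat, neg_zero, zero_mul, zero_div, add_zero]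
  ring_nf

lemma bdry2 {ξ z : ℂ} (hξ : ‖ξ‖ < 1) (hz : ‖z‖ = 1) :
    ((-Complex.I) * (-2 * z / (1 - (starRingEnd ℂ) ξ * z))).re
      = -(2 * (z.im - ξ.im)) / ((z.re - ξ.re) ^ 2 + (z.im - ξ.im) ^ 2) := by
  have hD := sub_ne_sphere hξ hz
  rw [sphere_F hξ hz]
  simp only [Complex.mul_re, Complex.neg_re, Complex.neg_im, Complex.I_re, Complex.I_im,
    Complex.conj_re, Complex.conj_im, Complex.div_re, Complex.div_im, Complex.normSq_apply,
    Complex.sub_re, Complex.sub_im, Complex.re_ofNat, Complex.im_ofNat, neg_zero, zero_mul,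
    zero_div, add_zero, zero_sub, sub_zero, one_mul]
  ring_nf

lemma bdry3 {ξ z : ℂ} (hξ : ‖ξ‖ < 1) (hz : ‖z‖ = 1) :
    (Complex.I * (-2 * z / (1 - (starRingEnd ℂ) ξ * z))).re
      = 2 * (z.im - ξ.im) / ((z.re - ξ.re) ^ 2 + (z.im - ξ.im) ^ 2) := by
  have hD := sub_ne_sphere hξ hz
  rw [sphere_F hξ hz]
  simp only [Complex.mul_re, Complex.neg_re, Complex.neg_im, Complex.I_re, Complex.I_im,
    Complex.conj_re, Complex.conj_im, Complex.div_re, Complex.div_im, Complex.normSq_apply,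
    Complex.sub_re, Complex.sub_im, Complex.re_ofNat, Complex.im_ofNat, neg_zero, zero_mul,
    zero_div, add_zero, zero_sub, sub_zero, one_mul]
  ring_nf

end AuxProofs

/-- Values and low-order derivatives at `ξ` of the harmonic extensions of the two families of
boundary data `h^{(−1,1)}` (part (i)) and `h^{(−1,2)}` (part (ii)). -/
theorem robin_function_hm1 (ξ : ℂ) (hξ : ξ ∈ ball (0 : ℂ) 1) :
    (∀ h1 h2 : ℂ → ℝ,
      ContinuousOn h1 (closedBall (0 : ℂ) 1) → ContinuousOn h2 (closedBall (0 : ℂ) 1) →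
      HarmonicOnSet h1 (ball (0 : ℂ) 1) → HarmonicOnSet h2 (ball (0 : ℂ) 1) →
      (∀ z ∈ sphere (0 : ℂ) 1,
        h1 z = -(2 * (z.re - ξ.re)) / ((z.re - ξ.re) ^ 2 + (z.im - ξ.im) ^ 2)) →
      (∀ z ∈ sphere (0 : ℂ) 1,
        h2 z = -(2 * (z.im - ξ.im)) / ((z.re - ξ.re) ^ 2 + (z.im - ξ.im) ^ 2)) →
      (h1 ξ = -(2 * ξ.re) / (1 - (ξ.re ^ 2 + ξ.im ^ 2)) ∧
       h2 ξ = -(2 * ξ.im) / (1 - (ξ.re ^ 2 + ξ.im ^ 2)) ∧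
       px h1 ξ = -2 / (1 - (ξ.re ^ 2 + ξ.im ^ 2)) ^ 2 ∧
       py h2 ξ = -2 / (1 - (ξ.re ^ 2 + ξ.im ^ 2)) ^ 2 ∧
       py h1 ξ = 0 ∧ px h2 ξ = 0 ∧
       px (px h1) ξ = -(4 * ξ.re) / (1 - (ξ.re ^ 2 + ξ.im ^ 2)) ^ 3 ∧
       py (py h1) ξ = 4 * ξ.re / (1 - (ξ.re ^ 2 + ξ.im ^ 2)) ^ 3 ∧
       px (px h2) ξ = 4 * ξ.im / (1 - (ξ.re ^ 2 + ξ.im ^ 2)) ^ 3 ∧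
       py (py h2) ξ = -(4 * ξ.im) / (1 - (ξ.re ^ 2 + ξ.im ^ 2)) ^ 3)) ∧
    (∀ h1 h2 : ℂ → ℝ,
      ContinuousOn h1 (closedBall (0 : ℂ) 1) → ContinuousOn h2 (closedBall (0 : ℂ) 1) →
      HarmonicOnSet h1 (ball (0 : ℂ) 1) → HarmonicOnSet h2 (ball (0 : ℂ) 1) →
      (∀ z ∈ sphere (0 : ℂ) 1,
        h1 z = 2 * (z.im - ξ.im) / ((z.re - ξ.re) ^ 2 + (z.im - ξ.im) ^ 2)) →
      (∀ z ∈ sphere (0 : ℂ) 1,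
        h2 z = -(2 * (z.re - ξ.re)) / ((z.re - ξ.re) ^ 2 + (z.im - ξ.im) ^ 2)) →
      (h1 ξ = 2 * ξ.im / (1 - (ξ.re ^ 2 + ξ.im ^ 2)) ∧
       h2 ξ = -(2 * ξ.re) / (1 - (ξ.re ^ 2 + ξ.im ^ 2)) ∧
       px h1 ξ = 0 ∧ py h2 ξ = 0 ∧
       py h1 ξ = 2 / (1 - (ξ.re ^ 2 + ξ.im ^ 2)) ^ 2 ∧
       px h2 ξ = -2 / (1 - (ξ.re ^ 2 + ξ.im ^ 2)) ^ 2 ∧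
       px (px h1) ξ = -(4 * ξ.im) / (1 - (ξ.re ^ 2 + ξ.im ^ 2)) ^ 3 ∧
       py (py h1) ξ = 4 * ξ.im / (1 - (ξ.re ^ 2 + ξ.im ^ 2)) ^ 3 ∧
       px (px h2) ξ = -(4 * ξ.re) / (1 - (ξ.re ^ 2 + ξ.im ^ 2)) ^ 3 ∧
       py (py h2) ξ = 4 * ξ.re / (1 - (ξ.re ^ 2 + ξ.im ^ 2)) ^ 3)) := by
  have hξn : ‖ξ‖ < 1 := by simpa using mem_ball_zero_iff.1 hξ
  have hsq : ‖ξ‖ ^ 2 = ξ.re ^ 2 + ξ.im ^ 2 := by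
    rw [← Complex.normSq_eq_norm_sq, Complex.normSq_apply]; ring
  have hdpos : 0 < 1 - (ξ.re ^ 2 + ξ.im ^ 2) := by nlinarith [norm_nonneg ξ]
  have hdne : 1 - (ξ.re ^ 2 + ξ.im ^ 2) ≠ 0 := ne_of_gt hdpos
  have hnd1 : (1:ℂ) - (starRingEnd ℂ) ξ * ξ = ((1 - (ξ.re ^ 2 + ξ.im ^ 2) : ℝ) : ℂ) := by
    have ha : (starRingEnd ℂ) ξ * ξ = ((ξ.re ^ 2 + ξ.im ^ 2 : ℝ) : ℂ) := by
      rw [mul_comm, Complex.mul_conj, Complex.normSq_apply]; push_cast; ring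
    rw [ha]; push_cast; ring
  have hnd2 : ((1:ℂ) - (starRingEnd ℂ) ξ * ξ) ^ 2
      = (((1 - (ξ.re ^ 2 + ξ.im ^ 2)) ^ 2 : ℝ) : ℂ) := by rw [hnd1]; push_cast; ring
  have hnd3 : ((1:ℂ) - (starRingEnd ℂ) ξ * ξ) ^ 3
      = (((1 - (ξ.re ^ 2 + ξ.im ^ 2)) ^ 3 : ℝ) : ℂ) := by rw [hnd1]; push_cast; ring
  constructor
  · intro h1 h2 hc1 hc2 hh1 hh2 hbd1 hbd2
    have C1 := core hξ 1 hc1 hh1 (fun z hz => (hbd1 z hz).trans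
      (bdry1 hξn (by simpa using mem_sphere_zero_iff_norm.1 hz)).symm)
    have C2 := core hξ (-Complex.I) hc2 hh2 (fun z hz => (hbd2 z hz).trans
      (bdry2 hξn (by simpa using mem_sphere_zero_iff_norm.1 hz)).symm)
    obtain ⟨v1, p1, q1, a1, b1⟩ := C1
    obtain ⟨v2, p2, q2, a2, b2⟩ := C2
    rw [hnd1] at v1 v2
    rw [hnd2] at p1 q1 p2 q2
    rw [hnd3] at a1 b1 a2 b2
    refine ⟨?_, ?_, ?_, ?_, ?_, ?_, ?_, ?_, ?_, ?_⟩
    · rw [v1]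
      simp only [one_mul, Complex.div_ofReal_re, Complex.mul_re, Complex.mul_im,
        Complex.re_ofNat, Complex.im_ofNat, Complex.neg_re, Complex.neg_im,
        Complex.conj_re, Complex.conj_im, Complex.I_re, Complex.I_im]
      try field_simp
      ring
    · rw [v2]
      simp only [one_mul, Complex.div_ofReal_re, Complex.div_ofReal_im, Complex.mul_re,
        Complex.mul_im, Complex.re_ofNat, Complex.im_ofNat, Complex.neg_re, Complex.neg_im,
        Complex.conj_re, Complex.conj_im, Complex.I_re, Complex.I_im]
      try field_simp
      ring
    · rw [p1]
      simp only [one_mul, Complex.div_ofReal_re, Complex.div_ofReal_im, Complex.mul_re,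
        Complex.mul_im, Complex.re_ofNat, Complex.im_ofNat, Complex.neg_re, Complex.neg_im,
        Complex.conj_re, Complex.conj_im, Complex.I_re, Complex.I_im]
      try field_simp
    · rw [q2]
      simp only [one_mul, Complex.div_ofReal_re, Complex.div_ofReal_im, Complex.mul_re,
        Complex.mul_im, Complex.re_ofNat, Complex.im_ofNat, Complex.neg_re, Complex.neg_im,
        Complex.conj_re, Complex.conj_im, Complex.I_re, Complex.I_im]
      try field_simp
      ring
    · rw [q1]
      simp only [one_mul, Complex.div_ofReal_re, Complex.div_ofReal_im, Complex.mul_re,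
        Complex.mul_im, Complex.re_ofNat, Complex.im_ofNat, Complex.neg_re, Complex.neg_im,
        Complex.conj_re, Complex.conj_im, Complex.I_re, Complex.I_im]
      try field_simp
      ring
    · rw [p2]
      simp only [one_mul, Complex.div_ofReal_re, Complex.div_ofReal_im, Complex.mul_re,
        Complex.mul_im, Complex.re_ofNat, Complex.im_ofNat, Complex.neg_re, Complex.neg_im,
        Complex.conj_re, Complex.conj_im, Complex.I_re, Complex.I_im]
      try field_simp
      ring
    · rw [a1]
      simp only [one_mul, Complex.div_ofReal_re, Complex.div_ofReal_im, Complex.mul_re,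
        Complex.mul_im, Complex.re_ofNat, Complex.im_ofNat, Complex.neg_re, Complex.neg_im,
        Complex.conj_re, Complex.conj_im, Complex.I_re, Complex.I_im]
      try field_simp
      ring
    · rw [b1]
      simp only [one_mul, Complex.div_ofReal_re, Complex.div_ofReal_im, Complex.mul_re,
        Complex.mul_im, Complex.re_ofNat, Complex.im_ofNat, Complex.neg_re, Complex.neg_im,
        Complex.conj_re, Complex.conj_im, Complex.I_re, Complex.I_im]
      try field_simp
      ring
    · rw [a2]
      simp only [one_mul, Complex.div_ofReal_re, Complex.div_ofReal_im, Complex.mul_re,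
        Complex.mul_im, Complex.re_ofNat, Complex.im_ofNat, Complex.neg_re, Complex.neg_im,
        Complex.conj_re, Complex.conj_im, Complex.I_re, Complex.I_im]
      try field_simp
      ring
    · rw [b2]
      simp only [one_mul, Complex.div_ofReal_re, Complex.div_ofReal_im, Complex.mul_re,
        Complex.mul_im, Complex.re_ofNat, Complex.im_ofNat, Complex.neg_re, Complex.neg_im,
        Complex.conj_re, Complex.conj_im, Complex.I_re, Complex.I_im]
      try field_simp
      ring
  · intro h1 h2 hc1 hc2 hh1 hh2 hbd1 hbd2
    have C1 := core hξ Complex.I hc1 hh1 (fun z hz => (hbd1 z hz).trans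
      (bdry3 hξn (by simpa using mem_sphere_zero_iff_norm.1 hz)).symm)
    have C2 := core hξ 1 hc2 hh2 (fun z hz => (hbd2 z hz).trans
      (bdry1 hξn (by simpa using mem_sphere_zero_iff_norm.1 hz)).symm)
    obtain ⟨v1, p1, q1, a1, b1⟩ := C1
    obtain ⟨v2, p2, q2, a2, b2⟩ := C2
    rw [hnd1] at v1 v2
    rw [hnd2] at p1 q1 p2 q2
    rw [hnd3] at a1 b1 a2 b2
    refine ⟨?_, ?_, ?_, ?_, ?_, ?_, ?_, ?_, ?_, ?_⟩
    · rw [v1]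
      simp only [one_mul, Complex.div_ofReal_re, Complex.div_ofReal_im, Complex.mul_re,
        Complex.mul_im, Complex.re_ofNat, Complex.im_ofNat, Complex.neg_re, Complex.neg_im,
        Complex.conj_re, Complex.conj_im, Complex.I_re, Complex.I_im]
      try field_simp
      ring
    · rw [v2]
      simp only [one_mul, Complex.div_ofReal_re, Complex.div_ofReal_im, Complex.mul_re,
        Complex.mul_im, Complex.re_ofNat, Complex.im_ofNat, Complex.neg_re, Complex.neg_im,
        Complex.conj_re, Complex.conj_im, Complex.I_re, Complex.I_im]
      try field_simp
      ring
    · rw [p1]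
      simp only [one_mul, Complex.div_ofReal_re, Complex.div_ofReal_im, Complex.mul_re,
        Complex.mul_im, Complex.re_ofNat, Complex.im_ofNat, Complex.neg_re, Complex.neg_im,
        Complex.conj_re, Complex.conj_im, Complex.I_re, Complex.I_im]
      try field_simp
      ring
    · rw [q2]
      simp only [one_mul, Complex.div_ofReal_re, Complex.div_ofReal_im, Complex.mul_re,
        Complex.mul_im, Complex.re_ofNat, Complex.im_ofNat, Complex.neg_re, Complex.neg_im,
        Complex.conj_re, Complex.conj_im, Complex.I_re, Complex.I_im]
      try field_simp
      ring
    · rw [q1]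
      simp only [one_mul, Complex.div_ofReal_re, Complex.div_ofReal_im, Complex.mul_re,
        Complex.mul_im, Complex.re_ofNat, Complex.im_ofNat, Complex.neg_re, Complex.neg_im,
        Complex.conj_re, Complex.conj_im, Complex.I_re, Complex.I_im]
      try field_simp
      ring
    · rw [p2]
      simp only [one_mul, Complex.div_ofReal_re, Complex.div_ofReal_im, Complex.mul_re,
        Complex.mul_im, Complex.re_ofNat, Complex.im_ofNat, Complex.neg_re, Complex.neg_im,
        Complex.conj_re, Complex.conj_im, Complex.I_re, Complex.I_im]
      try field_simp
    · rw [a1]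
      simp only [one_mul, Complex.div_ofReal_re, Complex.div_ofReal_im, Complex.mul_re,
        Complex.mul_im, Complex.re_ofNat, Complex.im_ofNat, Complex.neg_re, Complex.neg_im,
        Complex.conj_re, Complex.conj_im, Complex.I_re, Complex.I_im]
      try field_simp
      ring
    · rw [b1]
      simp only [one_mul, Complex.div_ofReal_re, Complex.div_ofReal_im, Complex.mul_re,
        Complex.mul_im, Complex.re_ofNat, Complex.im_ofNat, Complex.neg_re, Complex.neg_im,
        Complex.conj_re, Complex.conj_im, Complex.I_re, Complex.I_im]
      try field_simp
      ring
    · rw [a2]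
      simp only [one_mul, Complex.div_ofReal_re, Complex.div_ofReal_im, Complex.mul_re,
        Complex.mul_im, Complex.re_ofNat, Complex.im_ofNat, Complex.neg_re, Complex.neg_im,
        Complex.conj_re, Complex.conj_im, Complex.I_re, Complex.I_im]
      try field_simp
      ring
    · rw [b2]
      simp only [one_mul, Complex.div_ofReal_re, Complex.div_ofReal_im, Complex.mul_re,
        Complex.mul_im, Complex.re_ofNat, Complex.im_ofNat, Complex.neg_re, Complex.neg_im,
        Complex.conj_re, Complex.conj_im, Complex.I_re, Complex.I_im]
      try field_simp
      ring
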